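/- A topological space X is normal if and only if for every upper semicontinuous ξ: X → ℝ and lower semicontinuous η: X → ℝ with ξ ≤ η, there exists a continuous f: X → ℝ with ξ ≤ f ≤ η (Katětov–Tong insertion theorem). -/

import Mathlib

open Set Finset Filter Topology


lemma kt_approx {X : Type*} [TopologicalSpace X] [NormalSpace X] {g h : X → ℝ} {a b ε : ℝ}
    (hg : UpperSemicontinuous g) (hh : LowerSemicontinuous h) (hgh : ∀ x, g x ≤ h x)
    (hga : ∀ x, a ≤ g x) (hhb : ∀ x, h x ≤ b) (hε : 0 < ε) :
    ∃ f : X → ℝ, Continuous f ∧ ∀ x, g x - ε ≤ f x ∧ f x ≤ h x + ε := by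
  set N := ⌈(b - a) / ε⌉₊ with hN
  have hFc : ∀ k : ℕ, IsClosed {x | a + (k + 1) * ε ≤ g x} := by
    intro k
    have := (upperSemicontinuous_iff_isOpen_preimage.1 hg (a + (k + 1) * ε)).isClosed_compl
    convert this using 1
    ext x; simp [not_lt]
  have hCc : ∀ k : ℕ, IsClosed {x | h x ≤ a + k * ε} := by
    intro k
    have := (lowerSemicontinuous_iff_isOpen_preimage.1 hh (a + k * ε)).isClosed_compl
    convert this using 1
    ext x; simp [not_lt]
  have hdis : ∀ k : ℕ, Disjoint {x | h x ≤ a + k * ε} {x | a + (k + 1) * ε ≤ g x} := by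
    intro k
    rw [Set.disjoint_left]
    intro x hx1 hx2
    simp only [mem_setOf_eq] at hx1 hx2
    have := (hx2.trans (hgh x)).trans hx1
    nlinarith
  choose φ hφ0 hφ1 hφm using fun k =>
    exists_continuous_zero_one_of_isClosed (hCc k) (hFc k) (hdis k)
  refine ⟨fun x => a + ε * ∑ k ∈ Finset.range N, φ k x, ?_, ?_⟩
  · exact continuous_const.add (continuous_const.mul
      (continuous_finset_sum _ fun k _ => (φ k).continuous))
  intro x
  constructor
  · -- lower bound
    set c := (g x - a) / ε with hc
    have hc0 : 0 ≤ c := div_nonneg (by linarith [hga x]) hε.le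
    set m := min N ⌊c⌋₊ with hm
    have hsum : (m : ℝ) ≤ ∑ k ∈ Finset.range N, φ k x := by
      have h1 : ∀ k ∈ Finset.range m, (1 : ℝ) ≤ φ k x := by
        intro k hk
        rw [Finset.mem_range] at hk
        have hk' : (k : ℝ) + 1 ≤ c := by
          have : (k + 1 : ℕ) ≤ ⌊c⌋₊ := by omega
          calc (k : ℝ) + 1 = ((k + 1 : ℕ) : ℝ) := by push_cast; ring
          _ ≤ (⌊c⌋₊ : ℝ) := by exact_mod_cast this
          _ ≤ c := Nat.floor_le hc0
        have hx : x ∈ {x | a + (k + 1) * ε ≤ g x} := by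
          simp only [mem_setOf_eq]
          have : ((k : ℝ) + 1) * ε ≤ c * ε := by nlinarith
          rw [hc] at this
          rw [div_mul_cancel₀ _ hε.ne'] at this
          linarith
        simp [hφ1 k hx]
      calc (m : ℝ) = ∑ _k ∈ Finset.range m, (1 : ℝ) := by simp
      _ ≤ ∑ k ∈ Finset.range m, φ k x := Finset.sum_le_sum h1
      _ ≤ ∑ k ∈ Finset.range N, φ k x := by
          apply Finset.sum_le_sum_of_subset_of_nonneg
          · exact Finset.range_subset_range.2 (min_le_left _ _)
          · intro k _ _; exact (hφm k x).1
    have hεm : g x - a - ε ≤ ε * m := by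
      rcases le_total (N : ℝ) (⌊c⌋₊ : ℝ) with hle | hle
      · have hmN : (m : ℝ) = N := by
          have : m = N := min_eq_left (by exact_mod_cast hle)
          exact_mod_cast this
        rw [hmN]
        have : (b - a) / ε ≤ (N : ℝ) := Nat.le_ceil _
        have h2 : b - a ≤ ε * N := by
          rw [div_le_iff₀ hε] at this; linarith
        have := hhb x; have := hgh x
        linarith
      · have hmf : (m : ℝ) = ⌊c⌋₊ := by
          have : m = ⌊c⌋₊ := min_eq_right (by exact_mod_cast hle)
          exact_mod_cast this
        rw [hmf]
        have h3 : c < ⌊c⌋₊ + 1 := Nat.lt_floor_add_one c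
        have : c * ε < ((⌊c⌋₊ : ℝ) + 1) * ε := by nlinarith
        rw [hc, div_mul_cancel₀ _ hε.ne'] at this
        nlinarith
    calc g x - ε = a + (g x - a - ε) := by ring
    _ ≤ a + ε * m := by linarith
    _ ≤ a + ε * ∑ k ∈ Finset.range N, φ k x := by nlinarith
  · -- upper bound
    set d := (h x - a) / ε with hd
    have hd0 : 0 ≤ d := div_nonneg (by linarith [hga x, hgh x]) hε.le
    have hsum : ∑ k ∈ Finset.range N, φ k x ≤ (⌈d⌉₊ : ℝ) := by
      have h1 : ∀ k ∈ Finset.range N, φ k x ≤ (if (k : ℝ) < d then (1 : ℝ) else 0) := by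
        intro k _
        by_cases hk : (k : ℝ) < d
        · simp [hk, (hφm k x).2]
        · push_neg at hk
          have hx : x ∈ {x | h x ≤ a + k * ε} := by
            simp only [mem_setOf_eq]
            have : d * ε ≤ (k : ℝ) * ε := by nlinarith
            rw [hd, div_mul_cancel₀ _ hε.ne'] at this
            linarith
          rw [if_neg (not_lt.2 hk)]
          exact le_of_eq (hφ0 k hx)
      calc ∑ k ∈ Finset.range N, φ k x
          ≤ ∑ k ∈ Finset.range N, (if (k : ℝ) < d then (1 : ℝ) else 0) := Finset.sum_le_sum h1
      _ = ((Finset.range N).filter (fun k : ℕ => (k : ℝ) < d)).card := by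
          rw [Finset.sum_boole]
      _ ≤ (⌈d⌉₊ : ℝ) := by
          have : (Finset.range N).filter (fun k : ℕ => (k : ℝ) < d) ⊆ Finset.range ⌈d⌉₊ := by
            intro k hk
            simp only [Finset.mem_filter, Finset.mem_range] at hk ⊢
            exact Nat.lt_ceil.2 hk.2
          have := Finset.card_le_card this
          simp only [Finset.card_range] at this
          exact_mod_cast this
    have hceil : (⌈d⌉₊ : ℝ) < d + 1 := Nat.ceil_lt_add_one hd0
    have : ε * ∑ k ∈ Finset.range N, φ k x ≤ ε * (d + 1) := by nlinarith
    have hde : ε * d = h x - a := by rw [hd, mul_div_cancel₀ _ hε.ne']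
    have h4 : ε * (d + 1) = h x - a + ε := by rw [mul_add, hde]; ring
    simp only []
    linarith


lemma usc_max {X : Type*} [TopologicalSpace X] {u v : X → ℝ}
    (hu : UpperSemicontinuous u) (hv : UpperSemicontinuous v) :
    UpperSemicontinuous (fun x => max (u x) (v x)) := by
  rw [upperSemicontinuous_iff_isOpen_preimage] at hu hv ⊢
  intro y
  have : (fun x => max (u x) (v x)) ⁻¹' Iio y = u ⁻¹' Iio y ∩ v ⁻¹' Iio y := by
    ext x; simp [max_lt_iff]
  rw [this]; exact (hu y).inter (hv y)

lemma lsc_min {X : Type*} [TopologicalSpace X] {u v : X → ℝ}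
    (hu : LowerSemicontinuous u) (hv : LowerSemicontinuous v) :
    LowerSemicontinuous (fun x => min (u x) (v x)) := by
  rw [lowerSemicontinuous_iff_isOpen_preimage] at hu hv ⊢
  intro y
  have : (fun x => min (u x) (v x)) ⁻¹' Ioi y = u ⁻¹' Ioi y ∩ v ⁻¹' Ioi y := by
    ext x; simp [lt_min_iff]
  rw [this]; exact (hu y).inter (hv y)


lemma kt_bounded {X : Type*} [TopologicalSpace X] [NormalSpace X] {g h : X → ℝ} {a b : ℝ}
    (hg : UpperSemicontinuous g) (hh : LowerSemicontinuous h) (hgh : ∀ x, g x ≤ h x)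
    (hga : ∀ x, a ≤ g x) (hhb : ∀ x, h x ≤ b) :
    ∃ f : X → ℝ, Continuous f ∧ ∀ x, g x ≤ f x ∧ f x ≤ h x := by
  classical
  set Cond : ((X → ℝ) × (X → ℝ)) → Prop := fun p =>
    UpperSemicontinuous p.1 ∧ LowerSemicontinuous p.2 ∧ (∀ x, p.1 x ≤ p.2 x) ∧
      (∀ x, a ≤ p.1 x) ∧ (∀ x, p.2 x ≤ b) with hCond
  have step : ∀ (p : (X → ℝ) × (X → ℝ)) (n : ℕ), Cond p →
      ∃ f : X → ℝ, Continuous f ∧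
        ∀ x, p.1 x - (2⁻¹ : ℝ) ^ n ≤ f x ∧ f x ≤ p.2 x + (2⁻¹ : ℝ) ^ n := by
    intro p n hp
    exact kt_approx hp.1 hp.2.1 hp.2.2.1 hp.2.2.2.1 hp.2.2.2.2 (by positivity)
  choose! F hFc hFb using step
  set seq : ℕ → (X → ℝ) × (X → ℝ) := fun n => Nat.rec (g, h)
    (fun n p => (fun x => max (p.1 x) (F p n x - (2⁻¹ : ℝ) ^ n),
                 fun x => min (p.2 x) (F p n x + (2⁻¹ : ℝ) ^ n))) n with hseq
  have seq_succ : ∀ n, seq (n + 1) =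
      (fun x => max ((seq n).1 x) (F (seq n) n x - (2⁻¹ : ℝ) ^ n),
       fun x => min ((seq n).2 x) (F (seq n) n x + (2⁻¹ : ℝ) ^ n)) := fun n => rfl
  have hcond : ∀ n, Cond (seq n) := by
    intro n
    induction n with
    | zero => exact ⟨hg, hh, hgh, hga, hhb⟩
    | succ n ih =>
      have hfc := hFc (seq n) n ih
      have hfb := hFb (seq n) n ih
      obtain ⟨h1, h2, h3, h4, h5⟩ := ih
      rw [seq_succ]
      refine ⟨?_, ?_, ?_, ?_, ?_⟩
      · exact usc_max h1 ((hfc.sub continuous_const).upperSemicontinuous)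
      · exact lsc_min h2 ((hfc.add continuous_const).lowerSemicontinuous)
      · intro x
        simp only [max_le_iff, le_min_iff]
        have := hfb x
        have hp : (0 : ℝ) ≤ (2⁻¹ : ℝ) ^ n := by positivity
        refine ⟨⟨h3 x, by linarith [this.2]⟩, ⟨by linarith [this.1], by linarith⟩⟩
      · intro x; exact le_max_of_le_left (h4 x)
      · intro x; exact min_le_of_left_le (h5 x)
  set f : ℕ → X → ℝ := fun n => F (seq n) n with hf
  have hfcont : ∀ n, Continuous (f n) := fun n => hFc _ _ (hcond n)
  have hfb : ∀ n x, (seq n).1 x - (2⁻¹ : ℝ) ^ n ≤ f n x ∧ f n x ≤ (seq n).2 x + (2⁻¹ : ℝ) ^ n :=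
    fun n => hFb _ _ (hcond n)
  have hdist : ∀ x n, dist (f n x) (f (n + 1) x) ≤ (3 / 2 : ℝ) * (2⁻¹ : ℝ) ^ n := by
    intro x n
    have h1 := hfb n x
    have h2 := hfb (n + 1) x
    have e1 : (seq (n + 1)).1 x = max ((seq n).1 x) (f n x - (2⁻¹ : ℝ) ^ n) := by
      rw [seq_succ]
    have e2 : (seq (n + 1)).2 x = min ((seq n).2 x) (f n x + (2⁻¹ : ℝ) ^ n) := by
      rw [seq_succ]
    rw [Real.dist_eq, abs_le]
    have l1 : f n x - (2⁻¹ : ℝ) ^ n ≤ (seq (n + 1)).1 x := by rw [e1]; exact le_max_right _ _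
    have l2 : (seq (n + 1)).2 x ≤ f n x + (2⁻¹ : ℝ) ^ n := by rw [e2]; exact min_le_right _ _
    have p1 : ((2⁻¹ : ℝ) ^ (n + 1)) = (2⁻¹ : ℝ) ^ n * 2⁻¹ := pow_succ _ _
    constructor <;> nlinarith [h2.1, h2.2]
  have hcauchy : ∀ x, CauchySeq (fun n => f n x) :=
    fun x => cauchySeq_of_le_geometric 2⁻¹ (3 / 2) (by norm_num) (hdist x)
  choose L hL using fun x => cauchySeq_tendsto_of_complete (hcauchy x)
  have hLd : ∀ x n, dist (f n x) (L x) ≤ (3 / 2 : ℝ) * (2⁻¹ : ℝ) ^ n / (1 - 2⁻¹) :=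
    fun x n => dist_le_of_le_geometric_of_tendsto 2⁻¹ (3 / 2) (by norm_num) (hdist x) (hL x) n
  have hunif : TendstoUniformly (fun n x => f n x) L atTop := by
    rw [Metric.tendstoUniformly_iff]
    intro ε hε
    have : Tendsto (fun n : ℕ => (3 / 2 : ℝ) * (2⁻¹ : ℝ) ^ n / (1 - 2⁻¹)) atTop (𝓝 0) := by
      have h0 : Tendsto (fun n : ℕ => ((2⁻¹ : ℝ)) ^ n) atTop (𝓝 0) :=
        tendsto_pow_atTop_nhds_zero_of_lt_one (by norm_num) (by norm_num)
      have := (h0.const_mul (3 / 2 : ℝ)).div_const (1 - 2⁻¹)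
      simpa using this
    filter_upwards [this.eventually (gt_mem_nhds hε)] with n hn x
    rw [dist_comm]
    exact lt_of_le_of_lt (hLd x n) hn
  have hLcont : Continuous L := hunif.continuous (Frequently.of_forall hfcont)
  refine ⟨L, hLcont, fun x => ⟨?_, ?_⟩⟩
  · -- g ≤ L
    have hmono : ∀ n, g x ≤ (seq n).1 x := by
      intro n
      induction n with
      | zero => exact le_refl _
      | succ n ih => rw [seq_succ]; exact le_max_of_le_left ih
    have hev : ∀ n : ℕ, g x ≤ f n x + (2⁻¹ : ℝ) ^ n := by
      intro n
      have := (hfb n x).1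
      linarith [hmono n]
    have ht : Tendsto (fun n : ℕ => f n x + (2⁻¹ : ℝ) ^ n) atTop (𝓝 (L x + 0)) :=
      (hL x).add (tendsto_pow_atTop_nhds_zero_of_lt_one (by norm_num) (by norm_num))
    have := le_of_tendsto_of_tendsto tendsto_const_nhds ht (Eventually.of_forall hev)
    simpa using this
  · have hmono : ∀ n, (seq n).2 x ≤ h x := by
      intro n
      induction n with
      | zero => exact le_refl _
      | succ n ih => rw [seq_succ]; exact min_le_of_left_le ih
    have hev : ∀ n : ℕ, f n x - (2⁻¹ : ℝ) ^ n ≤ h x := by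
      intro n
      have := (hfb n x).2
      linarith [hmono n]
    have ht : Tendsto (fun n : ℕ => f n x - (2⁻¹ : ℝ) ^ n) atTop (𝓝 (L x - 0)) :=
      (hL x).sub (tendsto_pow_atTop_nhds_zero_of_lt_one (by norm_num) (by norm_num))
    have := le_of_tendsto_of_tendsto ht tendsto_const_nhds (Eventually.of_forall hev)
    simpa using this


/-- The Katětov–Tong insertion theorem: a T1 space `X` is normal if and only if
for every upper semicontinuous `ξ : X → ℝ` and lower semicontinuous `η : X → ℝ`
with `ξ ≤ η` there exists a continuous `f : X → ℝ` with `ξ ≤ f ≤ η`. -/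
theorem katetov_tong_insertion {X : Type*} [TopologicalSpace X] [T1Space X] :
    NormalSpace X ↔
    (∀ ξ η : X → ℝ, (∀ r : ℝ, IsOpen {x | ξ x < r}) → (∀ r : ℝ, IsOpen {x | r < η x}) →
      (∀ x, ξ x ≤ η x) →
      ∃ f : X → ℝ, Continuous f ∧ ∀ x, ξ x ≤ f x ∧ f x ≤ η x) := by
  constructor
  · intro hN ξ η hξ hη hξη
    have hξ' : UpperSemicontinuous ξ := by
      rw [upperSemicontinuous_iff_isOpen_preimage]
      intro y; exact hξ y
    have hη' : LowerSemicontinuous η := by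
      rw [lowerSemicontinuous_iff_isOpen_preimage]
      intro y; exact hη y
    set e : ℝ ≃o Ioo (-1 : ℝ) 1 := orderIsoIooNegOneOne ℝ with he
    have hecont : Continuous fun y : ℝ => ((e y : ℝ)) :=
      continuous_subtype_val.comp e.continuous
    have hemono : Monotone fun y : ℝ => ((e y : ℝ)) :=
      fun y z hyz => Subtype.coe_le_coe.2 (e.monotone hyz)
    set g : X → ℝ := fun x => (e (ξ x) : ℝ) with hg
    set h : X → ℝ := fun x => (e (η x) : ℝ) with hh
    have hgu : UpperSemicontinuous g := hecont.comp_upperSemicontinuous hξ' hemono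
    have hhl : LowerSemicontinuous h := hecont.comp_lowerSemicontinuous hη' hemono
    have hgh : ∀ x, g x ≤ h x := fun x => hemono (hξη x)
    have hga : ∀ x, (-1 : ℝ) ≤ g x := fun x => (e (ξ x)).2.1.le
    have hhb : ∀ x, h x ≤ 1 := fun x => (e (η x)).2.2.le
    obtain ⟨F, hFc, hFb⟩ := kt_bounded hgu hhl hgh hga hhb
    have hmem : ∀ x, F x ∈ Ioo (-1 : ℝ) 1 :=
      fun x => ⟨lt_of_lt_of_le (e (ξ x)).2.1 (hFb x).1, lt_of_le_of_lt (hFb x).2 (e (η x)).2.2⟩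
    refine ⟨fun x => e.symm ⟨F x, hmem x⟩, ?_, ?_⟩
    · exact e.symm.continuous.comp (hFc.subtype_mk hmem)
    · intro x
      constructor
      · have h1 : e (ξ x) ≤ (⟨F x, hmem x⟩ : Ioo (-1 : ℝ) 1) :=
          Subtype.coe_le_coe.1 (hFb x).1
        have := e.symm.monotone h1
        rwa [e.symm_apply_apply] at this
      · have h1 : (⟨F x, hmem x⟩ : Ioo (-1 : ℝ) 1) ≤ e (η x) :=
          Subtype.coe_le_coe.1 (hFb x).2
        have := e.symm.monotone h1
        rwa [e.symm_apply_apply] at this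
  · intro H
    classical
    refine ⟨fun s t hs ht hd => ?_⟩
    set ξ : X → ℝ := fun x => if x ∈ s then 1 else 0 with hξ
    set η : X → ℝ := fun x => if x ∈ t then 0 else 1 with hη
    have hξo : ∀ r : ℝ, IsOpen {x | ξ x < r} := by
      intro r
      rcases le_or_gt r 0 with hr | hr
      · convert isOpen_empty
        ext x; simp only [mem_setOf_eq, mem_empty_iff_false, iff_false, not_lt, hξ]
        split <;> linarith
      rcases le_or_gt r 1 with hr1 | hr1
      · convert hs.isOpen_compl using 1
        ext x; simp only [mem_setOf_eq, mem_compl_iff, hξ]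
        split <;> rename_i hx <;> simp [hx] <;> linarith
      · convert isOpen_univ
        ext x; simp only [mem_setOf_eq, mem_univ, iff_true, hξ]
        split <;> linarith
    have hηo : ∀ r : ℝ, IsOpen {x | r < η x} := by
      intro r
      rcases lt_or_ge r 0 with hr | hr
      · convert isOpen_univ
        ext x; simp only [mem_setOf_eq, mem_univ, iff_true, hη]
        split <;> linarith
      rcases lt_or_ge r 1 with hr1 | hr1
      · convert ht.isOpen_compl using 1
        ext x; simp only [mem_setOf_eq, mem_compl_iff, hη]
        split <;> rename_i hx <;> simp [hx] <;> linarith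
      · convert isOpen_empty
        ext x; simp only [mem_setOf_eq, mem_empty_iff_false, iff_false, not_lt, hη]
        split <;> linarith
    have hle : ∀ x, ξ x ≤ η x := by
      intro x
      simp only [hξ, hη]
      by_cases hxs : x ∈ s
      · have hxt : x ∉ t := fun hxt => (Set.disjoint_left.1 hd hxs) hxt
        simp [hxs, hxt]
      · rw [if_neg hxs]
        split <;> norm_num
    obtain ⟨f, hfc, hfb⟩ := H ξ η hξo hηo hle
    refine ⟨f ⁻¹' Ioi (1 / 2), f ⁻¹' Iio (1 / 2), isOpen_Ioi.preimage hfc,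
      isOpen_Iio.preimage hfc, ?_, ?_, ?_⟩
    · intro x hx
      have := (hfb x).1
      simp only [hξ, if_pos hx] at this
      simp only [Set.mem_preimage, Set.mem_Ioi]
      linarith
    · intro x hx
      have := (hfb x).2
      simp only [hη, if_pos hx] at this
      simp only [Set.mem_preimage, Set.mem_Iio]
      linarith
    · rw [Set.disjoint_left]
      intro x hx1 hx2
      simp only [Set.mem_preimage, Set.mem_Ioi, Set.mem_Iio] at hx1 hx2
      linarith
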